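/- arXiv:2408.08484 — 3 statements merged into one kernel-verified Lean document; each statement's English description precedes it below -/
import Mathlib

section
/- Let G be a finite connected simple graph with positive edge weights, let e_b be a bridge of G, and let G1 and G2 be the two connected components of G after deleting e_b. Then the maximum minimal cut value of G equals the maximum of: the weight of e_b, the maximum minimal cut value of G1 (over all minimal cuts of G1, if any exist), and the maximum minimal cut value of G2 (over all minimal cuts of G2, if any exist). -/
open Classical

/-- `IsMinimalCutOn G S K` says that `K` is one side of a minimal cut of the subgraph of `G`
induced on the vertex set `S`: `K ⊆ S`, both `K` and `S \ K` are nonempty, and the subgraphs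
induced on `K` and on `S \ K` are connected. -/
def IsMinimalCutOn {V : Type*} (G : SimpleGraph V) (S K : Set V) : Prop :=
  K ⊆ S ∧ K.Nonempty ∧ (S \ K).Nonempty ∧
    (G.induce K).Connected ∧ (G.induce (S \ K)).Connected

/-- The cut value of the cut `(K, S \ K)` of the subgraph of `G` induced on `S`:
the sum of the weights of all edges of `G` with one endpoint in `K` and the other in `S \ K`. -/
noncomputable def cutValueOn {V : Type*} [Fintype V] [DecidableEq V]
    (G : SimpleGraph V) (w : Sym2 V → ℝ) (S K : Set V) : ℝ :=
  ∑ e ∈ Finset.univ.filter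
      (fun e : Sym2 V => e ∈ G.edgeSet ∧ ∃ x ∈ K, ∃ y ∈ S \ K, e = s(x, y)), w e

namespace BridgeAux
variable {V : Type*} {G : SimpleGraph V} {a b : V}



lemma bridge_not_reach (hbridge : G.IsBridge s(a, b)) :
    ¬ (G.deleteEdges {s(a, b)}).Reachable a b :=
  SimpleGraph.isBridge_iff.mp hbridge

lemma not_both_reach (hbridge : G.IsBridge s(a, b)) (v : V) :
    ¬ ((G.deleteEdges {s(a, b)}).Reachable a v ∧ (G.deleteEdges {s(a, b)}).Reachable b v) :=
  fun ⟨h1, h2⟩ => bridge_not_reach hbridge (h1.trans h2.symm)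

lemma cover (hG : G.Connected) (hbridge : G.IsBridge s(a, b)) (v : V) :
    (G.deleteEdges {s(a, b)}).Reachable a v ∨ (G.deleteEdges {s(a, b)}).Reachable b v := by
  have key : ∀ (u v : V), G.Walk u v →
      ((G.deleteEdges {s(a, b)}).Reachable a u ∨ (G.deleteEdges {s(a, b)}).Reachable b u) →
      ((G.deleteEdges {s(a, b)}).Reachable a v ∨ (G.deleteEdges {s(a, b)}).Reachable b v) := by
    intro u v p
    induction p with
    | nil => exact id
    | cons h q ih =>
      rename_i x y z
      intro base
      apply ih
      by_cases hc : s(x, y) = s(a, b)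
      · rcases Sym2.eq_iff.mp hc with ⟨rfl, rfl⟩ | ⟨rfl, rfl⟩
        · exact Or.inr (SimpleGraph.Reachable.refl _)
        · exact Or.inl (SimpleGraph.Reachable.refl _)
      · have hadj : (G.deleteEdges {s(a, b)}).Adj x y := by
          simp only [SimpleGraph.deleteEdges_adj, Set.mem_singleton_iff]
          exact ⟨h, hc⟩
        exact base.imp (fun r => r.trans hadj.reachable) (fun r => r.trans hadj.reachable)
  exact key a v (hG.preconnected a v).some (Or.inl (SimpleGraph.Reachable.refl _))


/-- Hom from an induced subgraph avoiding the bridge into the deleted graph. -/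
lemma confine (S : Set V) (hS : (G.induce S).Connected) (hnab : ¬(a ∈ S ∧ b ∈ S)) :
    ∀ x y, x ∈ S → y ∈ S → (G.deleteEdges {s(a, b)}).Reachable x y := by
  intro x y hx hy
  have hmr : ∀ {u v : S}, (G.induce S).Adj u v →
      (G.deleteEdges {s(a, b)}).Adj u.val v.val := by
    intro u v huv
    simp only [SimpleGraph.comap_adj, Function.Embedding.coe_subtype] at huv
    simp only [SimpleGraph.deleteEdges_adj, Set.mem_singleton_iff]
    refine ⟨huv, fun hc => ?_⟩
    rcases Sym2.eq_iff.mp hc with ⟨h1, h2⟩ | ⟨h1, h2⟩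
    · exact hnab ⟨h1 ▸ u.2, h2 ▸ v.2⟩
    · exact hnab ⟨h2 ▸ v.2, h1 ▸ u.2⟩
  exact (hS.preconnected ⟨x, hx⟩ ⟨y, hy⟩).map
    ({ toFun := Subtype.val, map_rel' := hmr } : G.induce S →g G.deleteEdges {s(a, b)})

lemma confine_subset (hG : G.Connected) (hbridge : G.IsBridge s(a, b))
    (S : Set V) (hS : (G.induce S).Connected) (hnab : ¬(a ∈ S ∧ b ∈ S)) :
    S ⊆ {v | (G.deleteEdges {s(a, b)}).Reachable a v} ∨
    S ⊆ {v | (G.deleteEdges {s(a, b)}).Reachable b v} := by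
  obtain ⟨⟨x0, hx0⟩⟩ := hS.nonempty
  rcases cover hG hbridge x0 with h | h
  · exact Or.inl fun y hy => h.trans (confine S hS hnab x0 y hx0 hy)
  · exact Or.inr fun y hy => h.trans (confine S hS hnab x0 y hx0 hy)



/-- A walk in a subgraph `G'` whose support lies in `S` gives reachability in `G.induce S`. -/
lemma reach_induce_of_walk {G' : SimpleGraph V} (hle : G' ≤ G) (S : Set V) :
    ∀ {u v : V} (p : G'.Walk u v) (hs : ∀ z ∈ p.support, z ∈ S),
      (G.induce S).Reachable ⟨u, hs u p.start_mem_support⟩ ⟨v, hs v p.end_mem_support⟩ := by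
  intro u v p
  induction p with
  | nil => intro hs; rfl
  | cons h q ih =>
    rename_i x y z
    intro hs
    have hx : x ∈ S := hs x (by simp)
    have hy : y ∈ S := hs y (by simp [SimpleGraph.Walk.support_cons])
    have hadj : (G.induce S).Adj ⟨x, hx⟩ ⟨y, hy⟩ := by
      simpa using hle h
    exact hadj.reachable.trans (ih fun z hz => hs z (by simp [SimpleGraph.Walk.support_cons, hz]))

/-- The reachability class of `u` in a subgraph `G' ≤ G` induces a connected subgraph of `G`. -/
lemma comp_connected {G' : SimpleGraph V} (hle : G' ≤ G) (u : V) :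
    (G.induce {v | G'.Reachable u v}).Connected := by
  set A : Set V := {v | G'.Reachable u v} with hA
  have ha : u ∈ A := SimpleGraph.Reachable.refl _
  rw [SimpleGraph.connected_iff]
  refine ⟨?_, ⟨⟨u, ha⟩⟩⟩
  · rintro ⟨x, hx⟩ ⟨y, hy⟩
    obtain ⟨p⟩ := (hx : G'.Reachable u x).symm.trans hy
    have hs : ∀ z ∈ p.support, z ∈ A := by
      intro z hz
      classical
      exact (hx : G'.Reachable u x).trans ⟨p.takeUntil z hz⟩
    exact reach_induce_of_walk hle A p hs

lemma reach_induce_mono {S T : Set V} (hST : S ⊆ T) {x y : ↥S}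
    (h : (G.induce S).Reachable x y) :
    (G.induce T).Reachable ⟨x.1, hST x.2⟩ ⟨y.1, hST y.2⟩ :=
  h.map ({ toFun := Set.inclusion hST, map_rel' := fun h => h } : G.induce S →g G.induce T)

lemma induce_union_adj {P Q : Set V} (hP : (G.induce P).Connected)
    (hQ : (G.induce Q).Connected) {p q : V} (hp : p ∈ P) (hq : q ∈ Q) (hadj : G.Adj p q) :
    (G.induce (P ∪ Q)).Connected := by
  rw [SimpleGraph.connected_iff_exists_forall_reachable]
  refine ⟨⟨p, Or.inl hp⟩, ?_⟩
  rintro ⟨x, hx | hx⟩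
  · exact reach_induce_mono Set.subset_union_left (hP.preconnected ⟨p, hp⟩ ⟨x, hx⟩)
  · have h1 : (G.induce (P ∪ Q)).Reachable ⟨q, Or.inr hq⟩ ⟨x, Or.inr hx⟩ :=
      reach_induce_mono Set.subset_union_right (hQ.preconnected ⟨q, hq⟩ ⟨x, hx⟩)
    have h2 : (G.induce (P ∪ Q)).Adj ⟨p, Or.inl hp⟩ ⟨q, Or.inr hq⟩ := hadj
    exact h2.reachable.trans h1

lemma cutValueOn_eq_of_iff {V : Type*} [Fintype V] [DecidableEq V]
    {G : SimpleGraph V} (w : Sym2 V → ℝ) {S K S' K' : Set V}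
    (h : ∀ e ∈ G.edgeSet,
      ((∃ x ∈ K, ∃ y ∈ S \ K, e = s(x, y)) ↔ (∃ x ∈ K', ∃ y ∈ S' \ K', e = s(x, y)))) :
    cutValueOn G w S K = cutValueOn G w S' K' := by
  unfold cutValueOn
  apply Finset.sum_congr _ (fun _ _ => rfl)
  ext e
  simp only [Finset.mem_filter, Finset.mem_univ, true_and]
  exact and_congr_right fun he => h e he

lemma cutValueOn_eq_single {V : Type*} [Fintype V] [DecidableEq V]
    {G : SimpleGraph V} (w : Sym2 V → ℝ) {S K : Set V} {e0 : Sym2 V}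
    (h : ∀ e, (e ∈ G.edgeSet ∧ ∃ x ∈ K, ∃ y ∈ S \ K, e = s(x, y)) ↔ e = e0) :
    cutValueOn G w S K = w e0 := by
  unfold cutValueOn
  trans (∑ e ∈ ({e0} : Finset (Sym2 V)), w e)
  · apply Finset.sum_congr _ (fun _ _ => rfl)
    ext e
    simp only [Finset.mem_filter, Finset.mem_univ, true_and, Finset.mem_singleton]
    exact h e
  · exact Finset.sum_singleton _ _

lemma cutValue_bridge [Fintype V] [DecidableEq V] (w : Sym2 V → ℝ)
    (hG : G.Connected) (hab : G.Adj a b) (hbridge : G.IsBridge s(a, b)) :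
    cutValueOn G w Set.univ {v | (G.deleteEdges {s(a, b)}).Reachable a v} = w s(a, b) := by
  apply cutValueOn_eq_single
  intro e
  constructor
  · rintro ⟨he, x, hx, y, ⟨-, hy⟩, rfl⟩
    have hxy : G.Adj x y := he
    by_cases hc : s(x, y) = s(a, b)
    · exact hc
    · have hadj : (G.deleteEdges {s(a, b)}).Adj x y := by
        simp only [SimpleGraph.deleteEdges_adj, Set.mem_singleton_iff]; exact ⟨hxy, hc⟩
      exact absurd ((hx : (G.deleteEdges {s(a, b)}).Reachable a x).trans hadj.reachable) hy
  · rintro rfl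
    refine ⟨hab, a, SimpleGraph.Reachable.refl _, b, ⟨trivial, ?_⟩, rfl⟩
    exact fun h => bridge_not_reach hbridge h

lemma cross (hbridge : G.IsBridge s(a, b)) {x y : V} (hxy : G.Adj x y)
    (hx : (G.deleteEdges {s(a, b)}).Reachable a x)
    (hy : (G.deleteEdges {s(a, b)}).Reachable b y) : x = a ∧ y = b := by
  by_cases hc : s(x, y) = s(a, b)
  · rcases Sym2.eq_iff.mp hc with ⟨h1, h2⟩ | ⟨h1, h2⟩
    · exact ⟨h1, h2⟩
    · exact absurd ⟨h1 ▸ hx, SimpleGraph.Reachable.refl _⟩ (not_both_reach hbridge b)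
  · have hadj : (G.deleteEdges {s(a, b)}).Adj x y := by
      simp only [SimpleGraph.deleteEdges_adj, Set.mem_singleton_iff]; exact ⟨hxy, hc⟩
    exact absurd ⟨hx.trans hadj.reachable, hy⟩ (not_both_reach hbridge y)

lemma project (hG : G.Connected) (hbridge : G.IsBridge s(a, b)) (K : Set V)
    (haK : a ∈ K) :
    ∀ (u v : ↥K) (_ : (G.induce K).Walk u v)
      (hv : (G.deleteEdges {s(a, b)}).Reachable a v.1),
      ((hu : (G.deleteEdges {s(a, b)}).Reachable a u.1) →
        (G.induce (K ∩ {z | (G.deleteEdges {s(a, b)}).Reachable a z})).Reachable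
          ⟨u.1, u.2, hu⟩ ⟨v.1, v.2, hv⟩) ∧
      ((_ : (G.deleteEdges {s(a, b)}).Reachable b u.1) →
        (G.induce (K ∩ {z | (G.deleteEdges {s(a, b)}).Reachable a z})).Reachable
          ⟨a, haK, SimpleGraph.Reachable.refl _⟩ ⟨v.1, v.2, hv⟩) := by
  intro u v p
  induction p with
  | nil =>
    intro hv
    constructor
    · intro hu; rfl
    · intro hu; exact absurd ⟨hv, hu⟩ (not_both_reach hbridge _)
  | cons h q ih =>
    rename_i x y z
    intro hv
    obtain ⟨ihA, ihB⟩ := ih hv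
    have hGxy : G.Adj x.1 y.1 := h
    constructor
    · intro hu
      by_cases hyA : (G.deleteEdges {s(a, b)}).Reachable a y.1
      · -- edge stays in A
        have hadj : (G.induce (K ∩ {z | (G.deleteEdges {s(a, b)}).Reachable a z})).Adj
            ⟨x.1, x.2, hu⟩ ⟨y.1, y.2, hyA⟩ := hGxy
        exact hadj.reachable.trans (ihA hyA)
      · have hyB : (G.deleteEdges {s(a, b)}).Reachable b y.1 := by
          by_cases hc : s(x.1, y.1) = s(a, b)
          · rcases Sym2.eq_iff.mp hc with ⟨h1, h2⟩ | ⟨h1, h2⟩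
            · exact h2 ▸ SimpleGraph.Reachable.refl _
            · have hab' : (G.deleteEdges {s(a, b)}).Reachable a b := h1 ▸ hu
              exact (bridge_not_reach hbridge hab').elim
          · have hadj : (G.deleteEdges {s(a, b)}).Adj x.1 y.1 := by
              simp only [SimpleGraph.deleteEdges_adj, Set.mem_singleton_iff]
              exact ⟨hGxy, hc⟩
            exact absurd (hu.trans hadj.reachable) hyA
        obtain ⟨hxa, hyb⟩ := cross hbridge hGxy hu hyB
        have := ihB hyB
        have hux : (⟨x.1, x.2, hu⟩ :
            ↥(K ∩ {z | (G.deleteEdges {s(a, b)}).Reachable a z})) =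
            ⟨a, haK, SimpleGraph.Reachable.refl _⟩ := Subtype.ext hxa
        rw [hux]
        exact this
    · intro hu
      by_cases hyB : (G.deleteEdges {s(a, b)}).Reachable b y.1
      · exact ihB hyB
      · have hyA : (G.deleteEdges {s(a, b)}).Reachable a y.1 := by
          by_cases hc : s(x.1, y.1) = s(a, b)
          · rcases Sym2.eq_iff.mp hc with ⟨h1, h2⟩ | ⟨h1, h2⟩
            · have hab' : (G.deleteEdges {s(a, b)}).Reachable b a := h1 ▸ hu
              exact (bridge_not_reach hbridge hab'.symm).elim
            · exact h2 ▸ SimpleGraph.Reachable.refl _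
          · have hadj : (G.deleteEdges {s(a, b)}).Adj x.1 y.1 := by
              simp only [SimpleGraph.deleteEdges_adj, Set.mem_singleton_iff]
              exact ⟨hGxy, hc⟩
            exact absurd (hu.trans hadj.reachable) hyB
        obtain ⟨hya, hxb⟩ := cross hbridge hGxy.symm hyA hu
        have h2' := ihA hyA
        have heq : (⟨y.1, y.2, hyA⟩ :
            ↥(K ∩ {z | (G.deleteEdges {s(a, b)}).Reachable a z})) =
            ⟨a, haK, SimpleGraph.Reachable.refl _⟩ := Subtype.ext hya
        rw [heq] at h2'
        exact h2' 
  
lemma inter_connected (hG : G.Connected) (hbridge : G.IsBridge s(a, b)) (K : Set V)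
    (haK : a ∈ K) (hK : (G.induce K).Connected) :
    (G.induce (K ∩ {z | (G.deleteEdges {s(a, b)}).Reachable a z})).Connected := by
  rw [SimpleGraph.connected_iff_exists_forall_reachable]
  refine ⟨⟨a, haK, SimpleGraph.Reachable.refl _⟩, ?_⟩
  rintro ⟨x, hxK, hxA⟩
  obtain ⟨p⟩ := hK.preconnected ⟨a, haK⟩ ⟨x, hxK⟩
  exact (project hG hbridge K haK ⟨a, haK⟩ ⟨x, hxK⟩ p hxA).1 (SimpleGraph.Reachable.refl _)



section Directional
variable [Fintype V] [DecidableEq V] {w : Sym2 V → ℝ}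

lemma forward_A (w : Sym2 V → ℝ)
    (hG : G.Connected) (hab : G.Adj a b) (hbridge : G.IsBridge s(a, b))
    (K : Set V) (hcut : IsMinimalCutOn G Set.univ K) (haK : a ∈ K)
    (hS : Set.univ \ K ⊆ {v | (G.deleteEdges {s(a, b)}).Reachable a v}) :
    ∃ K', IsMinimalCutOn G {v | (G.deleteEdges {s(a, b)}).Reachable a v} K' ∧
      cutValueOn G w Set.univ K =
        cutValueOn G w {v | (G.deleteEdges {s(a, b)}).Reachable a v} K' := by
  obtain ⟨-, hKne, hSne, hKconn, hSconn⟩ := hcut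
  set A := {v | (G.deleteEdges {s(a, b)}).Reachable a v} with hA
  have haA : a ∈ A := SimpleGraph.Reachable.refl _
  have hcompl : A \ (K ∩ A) = Set.univ \ K := by
    ext x
    constructor
    · rintro ⟨hxA, hx⟩; exact ⟨trivial, fun hxK => hx ⟨hxK, hxA⟩⟩
    · intro hx; exact ⟨hS hx, fun h => hx.2 h.1⟩
  refine ⟨K ∩ A, ⟨Set.inter_subset_right, ⟨a, haK, haA⟩, ?_,
    inter_connected hG hbridge K haK hKconn, ?_⟩, ?_⟩
  · rw [hcompl]; exact hSne
  · rw [hcompl]; exact hSconn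
  · apply cutValueOn_eq_of_iff
    rintro e heE
    constructor
    · rintro ⟨x, hxK, y, hyS, rfl⟩
      have hxy : G.Adj x y := heE
      have hyA : y ∈ A := hS hyS
      have hxA : x ∈ A := by
        rcases cover hG hbridge x with h | h
        · exact h
        · obtain ⟨hya, hxb⟩ := cross hbridge hxy.symm hyA h
          exact absurd (hya ▸ haK : y ∈ K) hyS.2
      exact ⟨x, ⟨hxK, hxA⟩, y, (show y ∈ A \ (K ∩ A) by rw [hcompl]; exact hyS), rfl⟩
    · rintro ⟨x, hxKA, y, hyS, rfl⟩
      exact ⟨x, hxKA.1, y, (show y ∈ Set.univ \ K by rw [← hcompl]; exact hyS), rfl⟩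

lemma forward_A' (w : Sym2 V → ℝ)
    (hG : G.Connected) (hab : G.Adj a b) (hbridge : G.IsBridge s(a, b))
    (K : Set V) (hcut : IsMinimalCutOn G Set.univ K) (haK : a ∉ K)
    (hKA : K ⊆ {v | (G.deleteEdges {s(a, b)}).Reachable a v}) :
    IsMinimalCutOn G {v | (G.deleteEdges {s(a, b)}).Reachable a v} K ∧
      cutValueOn G w Set.univ K =
        cutValueOn G w {v | (G.deleteEdges {s(a, b)}).Reachable a v} K := by
  obtain ⟨-, hKne, hSne, hKconn, hSconn⟩ := hcut
  set A := {v | (G.deleteEdges {s(a, b)}).Reachable a v} with hA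
  have haA : a ∈ A := SimpleGraph.Reachable.refl _
  have haS : a ∈ Set.univ \ K := ⟨trivial, haK⟩
  have hcompl : (Set.univ \ K) ∩ A = A \ K := by
    ext x
    constructor
    · rintro ⟨⟨-, hxK⟩, hxA⟩; exact ⟨hxA, hxK⟩
    · rintro ⟨hxA, hxK⟩; exact ⟨⟨trivial, hxK⟩, hxA⟩
  have hAKconn : (G.induce (A \ K)).Connected := by
    have := inter_connected hG hbridge (Set.univ \ K) haS hSconn
    rwa [hcompl] at this
  have hval : ∀ e ∈ G.edgeSet,
      ((∃ x ∈ K, ∃ y ∈ Set.univ \ K, e = s(x, y)) ↔ (∃ x ∈ K, ∃ y ∈ A \ K, e = s(x, y))) := by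
    rintro e heE
    constructor
    · rintro ⟨x, hxK, y, hyS, rfl⟩
      have hxy : G.Adj x y := heE
      have hxA : x ∈ A := hKA hxK
      have hyA : y ∈ A := by
        rcases cover hG hbridge y with h | h
        · exact h
        · obtain ⟨hxa, hyb⟩ := cross hbridge hxy hxA h
          exact absurd (hxa ▸ hxK : a ∈ K) haK
      exact ⟨x, hxK, y, ⟨hyA, hyS.2⟩, rfl⟩
    · rintro ⟨x, hxK, y, hyS, rfl⟩
      exact ⟨x, hxK, y, ⟨trivial, hyS.2⟩, rfl⟩
  exact ⟨⟨hKA, hKne, ⟨a, haA, haK⟩, hKconn, hAKconn⟩, cutValueOn_eq_of_iff w hval⟩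


lemma backward_bridge (w : Sym2 V → ℝ)
    (hG : G.Connected) (hab : G.Adj a b) (hbridge : G.IsBridge s(a, b)) :
    IsMinimalCutOn G Set.univ {v | (G.deleteEdges {s(a, b)}).Reachable a v} ∧
      cutValueOn G w Set.univ {v | (G.deleteEdges {s(a, b)}).Reachable a v} = w s(a, b) := by
  set A := {v | (G.deleteEdges {s(a, b)}).Reachable a v} with hA
  set B := {v | (G.deleteEdges {s(a, b)}).Reachable b v} with hB
  have haA : a ∈ A := SimpleGraph.Reachable.refl _
  have hbB : b ∈ B := SimpleGraph.Reachable.refl _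
  have hbA : b ∉ A := fun h => bridge_not_reach hbridge h
  have hcompl : Set.univ \ A = B := by
    ext x
    constructor
    · rintro ⟨-, hx⟩
      rcases cover hG hbridge x with h | h
      · exact absurd h hx
      · exact h
    · intro hx
      exact ⟨trivial, fun h => not_both_reach hbridge x ⟨h, hx⟩⟩
  have hAconn : (G.induce A).Connected := comp_connected (G.deleteEdges_le _) a
  have hBconn : (G.induce B).Connected := comp_connected (G.deleteEdges_le _) b
  refine ⟨⟨Set.subset_univ _, ⟨a, haA⟩, ⟨b, trivial, hbA⟩, hAconn, ?_⟩,
    cutValue_bridge w hG hab hbridge⟩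
  rw [hcompl]; exact hBconn

lemma backward_A1 (w : Sym2 V → ℝ)
    (hG : G.Connected) (hab : G.Adj a b) (hbridge : G.IsBridge s(a, b))
    (K : Set V) (hcut : IsMinimalCutOn G {v | (G.deleteEdges {s(a, b)}).Reachable a v} K)
    (haK : a ∉ K) :
    IsMinimalCutOn G Set.univ K ∧
      cutValueOn G w Set.univ K =
        cutValueOn G w {v | (G.deleteEdges {s(a, b)}).Reachable a v} K := by
  obtain ⟨hKA, hKne, hAKne, hKconn, hAKconn⟩ := hcut
  set A := {v | (G.deleteEdges {s(a, b)}).Reachable a v} with hA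
  set B := {v | (G.deleteEdges {s(a, b)}).Reachable b v} with hB
  have haA : a ∈ A := SimpleGraph.Reachable.refl _
  have hbB : b ∈ B := SimpleGraph.Reachable.refl _
  have hBconn : (G.induce B).Connected := comp_connected (G.deleteEdges_le _) b
  have hcompl : Set.univ \ K = (A \ K) ∪ B := by
    ext x
    constructor
    · rintro ⟨-, hx⟩
      rcases cover hG hbridge x with h | h
      · exact Or.inl ⟨h, hx⟩
      · exact Or.inr h
    · rintro (⟨hxA, hx⟩ | hx)
      · exact ⟨trivial, hx⟩
      · exact ⟨trivial, fun h => not_both_reach hbridge x ⟨hKA h, hx⟩⟩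
  have hUconn : (G.induce ((A \ K) ∪ B)).Connected :=
    induce_union_adj hAKconn hBconn ⟨haA, haK⟩ hbB hab
  refine ⟨⟨Set.subset_univ _, hKne, ?_, hKconn, ?_⟩, ?_⟩
  · obtain ⟨x, hx⟩ := hAKne
    exact ⟨x, trivial, hx.2⟩
  · rw [hcompl]; exact hUconn
  · apply cutValueOn_eq_of_iff
    rintro e heE
    constructor
    · rintro ⟨x, hxK, y, hyS, rfl⟩
      have hxy : G.Adj x y := heE
      have hxA : x ∈ A := hKA hxK
      have hyA : y ∈ A := by
        rcases cover hG hbridge y with h | h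
        · exact h
        · obtain ⟨hxa, hyb⟩ := cross hbridge hxy hxA h
          exact absurd (hxa ▸ hxK : a ∈ K) haK
      exact ⟨x, hxK, y, ⟨hyA, hyS.2⟩, rfl⟩
    · rintro ⟨x, hxK, y, hyS, rfl⟩
      exact ⟨x, hxK, y, ⟨trivial, hyS.2⟩, rfl⟩

lemma backward_A2 (w : Sym2 V → ℝ)
    (hG : G.Connected) (hab : G.Adj a b) (hbridge : G.IsBridge s(a, b))
    (K : Set V) (hcut : IsMinimalCutOn G {v | (G.deleteEdges {s(a, b)}).Reachable a v} K)
    (haK : a ∈ K) :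
    ∃ K', IsMinimalCutOn G Set.univ K' ∧
      cutValueOn G w Set.univ K' =
        cutValueOn G w {v | (G.deleteEdges {s(a, b)}).Reachable a v} K := by
  obtain ⟨hKA, hKne, hAKne, hKconn, hAKconn⟩ := hcut
  set A := {v | (G.deleteEdges {s(a, b)}).Reachable a v} with hA
  set B := {v | (G.deleteEdges {s(a, b)}).Reachable b v} with hB
  have haA : a ∈ A := SimpleGraph.Reachable.refl _
  have hbB : b ∈ B := SimpleGraph.Reachable.refl _
  have hBconn : (G.induce B).Connected := comp_connected (G.deleteEdges_le _) b
  have hcompl : Set.univ \ (K ∪ B) = A \ K := by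
    ext x
    constructor
    · rintro ⟨-, hx⟩
      rcases cover hG hbridge x with h | h
      · exact ⟨h, fun hK => hx (Or.inl hK)⟩
      · exact absurd h (fun hB => hx (Or.inr hB))
    · rintro ⟨hxA, hx⟩
      refine ⟨trivial, ?_⟩
      rintro (h | h)
      · exact hx h
      · exact not_both_reach hbridge x ⟨hxA, h⟩
  have hUconn : (G.induce (K ∪ B)).Connected :=
    induce_union_adj hKconn hBconn haK hbB hab
  refine ⟨K ∪ B, ⟨Set.subset_univ _, ⟨a, Or.inl haK⟩, ?_, hUconn, ?_⟩, ?_⟩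
  · obtain ⟨x, hx⟩ := hAKne
    rw [← hcompl] at hx
    exact ⟨x, hx⟩
  · rw [hcompl]; exact hAKconn
  · apply cutValueOn_eq_of_iff
    rintro e heE
    constructor
    · rintro ⟨x, hxKB, y, hyS, rfl⟩
      have hxy : G.Adj x y := heE
      have hyAK : y ∈ A \ K := by rw [← hcompl]; exact hyS
      have hxK : x ∈ K := by
        rcases hxKB with h | h
        · exact h
        · obtain ⟨hya, hxb⟩ := cross hbridge hxy.symm hyAK.1 h
          exact absurd (hya ▸ haK : y ∈ K) hyAK.2
      exact ⟨x, hxK, y, hyAK, rfl⟩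
    · rintro ⟨x, hxK, y, hyAK, rfl⟩
      refine ⟨x, Or.inl hxK, y, ?_, rfl⟩
      rw [hcompl]; exact hyAK

end Directional

end BridgeAux


set_option maxHeartbeats 1000000 in
open BridgeAux in
/-- Let `G` be a finite connected simple graph with positive edge weights,
let `s(a, b)` be a bridge of `G`, and let `G1`, `G2` be the two connected components of `G`
after deleting the bridge (the components of the endpoints `a` and `b`). Then the maximum
minimal cut value of `G` equals the maximum of: the weight of the bridge, the minimal cut
values of `G1`, and the minimal cut values of `G2`. -/
theorem maxMinimalCut_bridge_decomposition {V : Type*} [Fintype V] [DecidableEq V]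
    (G : SimpleGraph V) (hG : G.Connected)
    (w : Sym2 V → ℝ) (hw : ∀ e ∈ G.edgeSet, 0 < w e)
    (a b : V) (hab : G.Adj a b) (hbridge : G.IsBridge s(a, b)) :
    sSup {r : ℝ | ∃ K : Set V,
        IsMinimalCutOn G Set.univ K ∧ r = cutValueOn G w Set.univ K} =
      sSup ({w s(a, b)} ∪
        {r : ℝ | ∃ K : Set V,
            IsMinimalCutOn G {v | (G.deleteEdges {s(a, b)}).Reachable a v} K ∧
            r = cutValueOn G w {v | (G.deleteEdges {s(a, b)}).Reachable a v} K} ∪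
        {r : ℝ | ∃ K : Set V,
            IsMinimalCutOn G {v | (G.deleteEdges {s(a, b)}).Reachable b v} K ∧
            r = cutValueOn G w {v | (G.deleteEdges {s(a, b)}).Reachable b v} K}) := by
  have hswap : s(b, a) = s(a, b) := Sym2.eq_swap
  have hbridge' : G.IsBridge s(b, a) := by rw [hswap]; exact hbridge
  congr 1
  ext r
  simp only [Set.mem_union, Set.mem_setOf_eq, Set.mem_singleton_iff]
  constructor
  · rintro ⟨K, hcut, rfl⟩
    by_cases haK : a ∈ K <;> by_cases hbK : b ∈ K
    · -- both endpoints in K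
      have hSconn := hcut.2.2.2.2
      have hnab : ¬(a ∈ Set.univ \ K ∧ b ∈ Set.univ \ K) := fun ⟨h, _⟩ => h.2 haK
      rcases confine_subset hG hbridge (Set.univ \ K) hSconn hnab with hS | hS
      · obtain ⟨K', h1, h2⟩ := forward_A w hG hab hbridge K hcut haK hS
        exact Or.inl (Or.inr ⟨K', h1, h2⟩)
      · rw [← hswap] at hS
        obtain ⟨K', h1, h2⟩ := forward_A w hG hab.symm hbridge' K hcut hbK hS
        rw [hswap] at h1 h2
        exact Or.inr ⟨K', h1, h2⟩
    · -- a ∈ K, b ∉ K : K is the component of a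
      have hKconn := hcut.2.2.2.1
      have hSconn := hcut.2.2.2.2
      have hnabK : ¬(a ∈ K ∧ b ∈ K) := fun h => hbK h.2
      have hKA : K ⊆ {v | (G.deleteEdges {s(a, b)}).Reachable a v} := by
        rcases confine_subset hG hbridge K hKconn hnabK with h | h
        · exact h
        · exact absurd (h haK) (fun hr => bridge_not_reach hbridge hr.symm)
      have hnabS : ¬(a ∈ Set.univ \ K ∧ b ∈ Set.univ \ K) := fun ⟨h, _⟩ => h.2 haK
      have hSB : Set.univ \ K ⊆ {v | (G.deleteEdges {s(a, b)}).Reachable b v} := by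
        rcases confine_subset hG hbridge (Set.univ \ K) hSconn hnabS with h | h
        · exact absurd (h ⟨trivial, hbK⟩) (fun hr => bridge_not_reach hbridge hr)
        · exact h
      have hKeq : K = {v | (G.deleteEdges {s(a, b)}).Reachable a v} := by
        ext x
        constructor
        · exact fun h => hKA h
        · intro hx
          by_contra hxK
          exact not_both_reach hbridge x ⟨hx, hSB ⟨trivial, hxK⟩⟩
      refine Or.inl (Or.inl ?_)
      rw [hKeq]
      exact cutValue_bridge w hG hab hbridge
    · -- b ∈ K, a ∉ K : K is the component of b
      have hKconn := hcut.2.2.2.1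
      have hSconn := hcut.2.2.2.2
      have hnabK : ¬(a ∈ K ∧ b ∈ K) := fun h => haK h.1
      have hKB : K ⊆ {v | (G.deleteEdges {s(a, b)}).Reachable b v} := by
        rcases confine_subset hG hbridge K hKconn hnabK with h | h
        · exact absurd (h hbK) (fun hr => bridge_not_reach hbridge hr)
        · exact h
      have hnabS : ¬(a ∈ Set.univ \ K ∧ b ∈ Set.univ \ K) := fun ⟨_, h⟩ => h.2 hbK
      have hSA : Set.univ \ K ⊆ {v | (G.deleteEdges {s(a, b)}).Reachable a v} := by
        rcases confine_subset hG hbridge (Set.univ \ K) hSconn hnabS with h | h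
        · exact h
        · exact absurd (h ⟨trivial, haK⟩) (fun hr => bridge_not_reach hbridge hr.symm)
      have hKeq : K = {v | (G.deleteEdges {s(a, b)}).Reachable b v} := by
        ext x
        constructor
        · exact fun h => hKB h
        · intro hx
          by_contra hxK
          exact not_both_reach hbridge x ⟨hSA ⟨trivial, hxK⟩, hx⟩
      refine Or.inl (Or.inl ?_)
      rw [hKeq]
      have := cutValue_bridge (a := b) (b := a) w hG hab.symm hbridge'
      rw [hswap] at this
      exact this
    · -- neither endpoint in K
      have hKconn := hcut.2.2.2.1
      have hnabK : ¬(a ∈ K ∧ b ∈ K) := fun h => haK h.1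
      rcases confine_subset hG hbridge K hKconn hnabK with hKA | hKB
      · obtain ⟨h1, h2⟩ := forward_A' w hG hab hbridge K hcut haK hKA
        exact Or.inl (Or.inr ⟨K, h1, h2⟩)
      · rw [← hswap] at hKB
        obtain ⟨h1, h2⟩ := forward_A' w hG hab.symm hbridge' K hcut hbK hKB
        rw [hswap] at h1 h2
        exact Or.inr ⟨K, h1, h2⟩
  · rintro ((hr | ⟨K, hcut, rfl⟩) | ⟨K, hcut, rfl⟩)
    · obtain ⟨h1, h2⟩ := backward_bridge w hG hab hbridge
      exact ⟨_, h1, by rw [hr, h2]⟩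
    · by_cases haK : a ∈ K
      · obtain ⟨K', h1, h2⟩ := backward_A2 w hG hab hbridge K hcut haK
        exact ⟨K', h1, h2.symm⟩
      · obtain ⟨h1, h2⟩ := backward_A1 w hG hab hbridge K hcut haK
        exact ⟨K, h1, h2.symm⟩
    · rw [← hswap] at hcut
      by_cases hbK : b ∈ K
      · obtain ⟨K', h1, h2⟩ := backward_A2 w hG hab.symm hbridge' K hcut hbK
        rw [hswap] at h2
        exact ⟨K', h1, h2.symm⟩
      · obtain ⟨h1, h2⟩ := backward_A1 w hG hab.symm hbridge' K hcut hbK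
        rw [hswap] at h2
        exact ⟨K, h1, h2.symm⟩
end

section
/- Let G be a finite connected simple graph with positive edge weights, let B be the set of all bridges of G, and let G1, ..., Gt be the connected components of the graph obtained from G by deleting all edges in B. Then the maximum minimal cut value of G equals the maximum of the set consisting of the weights of the bridges in B together with, for each i, all cut values of minimal cuts of Gi. -/
open Classical

section Helpers

open SimpleGraph

variable {V : Type*} {G : SimpleGraph V}


/-- If a path between `a` and `b` uses a bridge, then `a` and `b` are not reachable
after deleting that bridge. -/
lemma not_reach_delete_of_bridge_mem : ∀ {a b : V} (p : G.Walk a b), p.IsPath →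
    ∀ {e : Sym2 V}, G.IsBridge e → e ∈ p.edges → ¬(G.deleteEdges {e}).Reachable a b := by
  intro a b p
  induction p with
  | nil => intro _ e _ hmem; simp at hmem
  | cons h q ih =>
    rename_i u c d
    intro hp e he hmem hr
    rw [Walk.cons_isPath_iff] at hp
    by_cases hec : e = s(u, c)
    · subst hec
      have hq : ∀ e' ∈ q.edges, e' ∉ ({s(u, c)} : Set (Sym2 V)) := by
        intro e' he' h'
        rw [Set.mem_singleton_iff] at h'
        subst h'
        exact hp.2 (q.fst_mem_support_of_mem_edges he')
      have hcd : (G.deleteEdges {s(u, c)}).Reachable c d := ⟨q.toDeleteEdges _ hq⟩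
      have : (G.deleteEdges {s(u, c)}).Reachable u c := hr.trans hcd.symm
      exact isBridge_iff.mp he this
    · have hmem' : e ∈ q.edges := by
        rcases List.mem_cons.mp (by simpa using hmem) with h' | h'
        · exact absurd h' hec
        · exact h'
      have hadj : (G.deleteEdges {e}).Adj u c := by
        rw [deleteEdges_adj]
        exact ⟨h, by simpa using fun h' => hec h'.symm⟩
      exact ih hp.1 he hmem' (hadj.reachable.symm.trans hr)

/-- If `u` and `v` are separated after deleting all bridges, then some single bridge
separates them. -/
lemma exists_bridge_sep (hG : G.Connected) {u v : V}
    (h : ¬(G.deleteEdges {e | G.IsBridge e}).Reachable u v) :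
    ∃ e, G.IsBridge e ∧ ¬(G.deleteEdges {e}).Reachable u v := by
  obtain ⟨q⟩ := hG.preconnected u v
  by_cases hb : ∃ e ∈ q.bypass.edges, G.IsBridge e
  · obtain ⟨e, he, hbe⟩ := hb
    exact ⟨e, hbe, not_reach_delete_of_bridge_mem q.bypass q.bypass_isPath hbe he⟩
  · push_neg at hb
    exact absurd ⟨q.bypass.toDeleteEdges _ hb⟩ h

lemma reach_deleteBridges_of_forall (hG : G.Connected) {u v : V}
    (h : ∀ e, G.IsBridge e → (G.deleteEdges {e}).Reachable u v) :
    (G.deleteEdges {e | G.IsBridge e}).Reachable u v := by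
  by_contra hc
  obtain ⟨e, he, hne⟩ := exists_bridge_sep hG hc
  exact hne (h e he)

/-- Vertices on a bridge-free walk stay in the component of the start. -/
lemma support_reach_of_no_bridge {a b : V} (p : G.Walk a b)
    (hB : ∀ e ∈ p.edges, ¬G.IsBridge e) :
    ∀ v ∈ p.support, (G.deleteEdges {e | G.IsBridge e}).Reachable a v := by
  intro m hm
  refine ⟨(p.toDeleteEdges {e | G.IsBridge e} (fun e he h' => hB e he h')).takeUntil m ?_⟩
  rwa [Walk.toDeleteEdges, Walk.support_transfer]

/-- A path between two vertices in the same bridge-free component avoids all bridges. -/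
lemma no_bridge_of_path_reach {a b : V}
    (hr : (G.deleteEdges {e | G.IsBridge e}).Reachable a b)
    (p : G.Walk a b) (hp : p.IsPath) : ∀ e ∈ p.edges, ¬G.IsBridge e := by
  intro e he hbe
  exact not_reach_delete_of_bridge_mem p hp hbe he
    (hr.mono (G.deleteEdges_anti (by simpa using hbe)))

/-- There is always an edge across a nontrivial cut of a connected graph. -/
lemma exists_crossing_edge (hG : G.Connected) {K : Set V} (hK : K.Nonempty)
    (hK' : (Set.univ \ K).Nonempty) : ∃ x ∈ K, ∃ y, y ∉ K ∧ G.Adj x y := by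
  obtain ⟨a, ha⟩ := hK
  obtain ⟨b, hb⟩ := hK'
  obtain ⟨p⟩ := hG.preconnected a b
  have aux : ∀ {a b : V} (p : G.Walk a b), a ∈ K → b ∉ K →
      ∃ x ∈ K, ∃ y, y ∉ K ∧ G.Adj x y := by
    intro a b p
    induction p with
    | nil => intro ha hb; exact absurd ha hb
    | cons h q ih =>
      rename_i x c d
      intro ha hb
      by_cases hc : c ∈ K
      · exact ih hc hb
      · exact ⟨x, ha, c, hc, h⟩
  exact aux p ha hb.2


lemma cutValueOn_congr [Fintype V] [DecidableEq V] (w : Sym2 V → ℝ) {S K S' K' : Set V}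
    (h : ∀ e ∈ G.edgeSet, ((∃ x ∈ K, ∃ y ∈ S \ K, e = s(x, y)) ↔
      (∃ x ∈ K', ∃ y ∈ S' \ K', e = s(x, y)))) :
    cutValueOn G w S K = cutValueOn G w S' K' := by
  unfold cutValueOn
  exact Finset.sum_congr (Finset.filter_congr fun e _ => and_congr_right (h e)) fun _ _ => rfl

lemma cutValueOn_eq_single [Fintype V] [DecidableEq V] (w : Sym2 V → ℝ) {S K : Set V}
    {e0 : Sym2 V}
    (h : ∀ e, (e ∈ G.edgeSet ∧ ∃ x ∈ K, ∃ y ∈ S \ K, e = s(x, y)) ↔ e = e0) :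
    cutValueOn G w S K = w e0 := by
  unfold cutValueOn
  have h2 : (Finset.univ.filter
      (fun e : Sym2 V => e ∈ G.edgeSet ∧ ∃ x ∈ K, ∃ y ∈ S \ K, e = s(x, y))) =
      Finset.univ.filter (fun e : Sym2 V => e = e0) :=
    Finset.filter_congr fun e _ => h e
  rw [Finset.sum_congr h2 fun _ _ => rfl, Finset.filter_eq']
  simp

lemma reach_induce_of_walk {s : Set V} : ∀ {a b : V} (p : G.Walk a b)
    (_ : ∀ v ∈ p.support, v ∈ s) (ha : a ∈ s) (hb : b ∈ s),
    (G.induce s).Reachable ⟨a, ha⟩ ⟨b, hb⟩ := by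
  intro a b p
  induction p with
  | nil => intro _ ha hb; exact Reachable.refl _
  | cons h q ih =>
    rename_i u c d
    intro hs ha hb
    have hc : c ∈ s := hs c (by simp)
    refine (Adj.reachable ?_).trans (ih (fun v hv => hs v (by simp [hv])) hc hb)
    exact h

/-- From reachability in an induced graph, extract a path in `G` with support in `s`. -/
lemma exists_path_of_induce_reach {s : Set V} {a b : ↑s}
    (h : (G.induce s).Reachable a b) :
    ∃ p : G.Walk a.1 b.1, p.IsPath ∧ ∀ v ∈ p.support, v ∈ s := by
  obtain ⟨q⟩ := h
  let p := q.map (Embedding.induce s).toHom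
  refine ⟨p.bypass, Walk.bypass_isPath p, fun v hv => ?_⟩
  have := p.support_bypass_subset hv
  rw [Walk.support_map, List.mem_map] at this
  obtain ⟨⟨u, hu⟩, _, rfl⟩ := this
  exact hu

/-- From reachability in a subgraph, extract a path in `G` with edges in the subgraph. -/
lemma exists_path_of_le_reach {H : SimpleGraph V} (hle : H ≤ G) {a b : V}
    (h : H.Reachable a b) :
    ∃ p : G.Walk a b, p.IsPath ∧ ∀ e ∈ p.edges, e ∈ H.edgeSet := by
  obtain ⟨q⟩ := h
  let p := q.map (Hom.ofLE hle)
  refine ⟨p.bypass, Walk.bypass_isPath p, fun e he => ?_⟩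
  have := p.edges_bypass_subset he
  rw [Walk.edges_map, List.mem_map] at this
  obtain ⟨e', he', rfl⟩ := this
  simpa using q.edges_subset_edgeSet he'

/-- From reachability in a spanning subgraph whose component from `a` lies in `s`,
get reachability in the induced graph on `s`. -/
lemma induce_reach_of_le_reach {H : SimpleGraph V} (hle : H ≤ G) {s : Set V} {a b : V}
    (h : H.Reachable a b) (hs : ∀ m, H.Reachable a m → m ∈ s) (hb : b ∈ s) :
    (G.induce s).Reachable ⟨a, hs a (Reachable.refl a)⟩ ⟨b, hb⟩ := by
  obtain ⟨q⟩ := h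
  refine reach_induce_of_walk (q.map (Hom.ofLE hle)) ?_ _ _
  intro m hm
  rw [Walk.support_map] at hm
  obtain ⟨m', hm', rfl⟩ := List.mem_map.mp hm
  exact hs _ ⟨q.takeUntil m' hm'⟩

/-- After deleting a bridge, every vertex is reachable from one of its two endpoints. -/
lemma bridge_cover (hG : G.Connected) {x y : V} (he : G.IsBridge s(x, y)) (u : V) :
    (G.deleteEdges {s(x, y)}).Reachable x u ∨ (G.deleteEdges {s(x, y)}).Reachable y u := by
  obtain ⟨p⟩ := hG.preconnected x u
  have aux : ∀ {a u : V} (_ : G.Walk a u),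
      ((G.deleteEdges {s(x, y)}).Reachable x a ∨ (G.deleteEdges {s(x, y)}).Reachable y a) →
      ((G.deleteEdges {s(x, y)}).Reachable x u ∨ (G.deleteEdges {s(x, y)}).Reachable y u) := by
    intro a u p
    induction p with
    | nil => exact id
    | cons h q ih =>
      rename_i a c d
      intro hbase
      by_cases hce : s(a, c) = s(x, y)
      · rcases Sym2.eq_iff.mp hce with ⟨rfl, rfl⟩ | ⟨rfl, rfl⟩
        · exact ih (Or.inr (Reachable.refl _))
        · exact ih (Or.inl (Reachable.refl _))
      · have hadj : (G.deleteEdges {s(x, y)}).Adj a c := by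
          rw [deleteEdges_adj]; exact ⟨h, by simpa using hce⟩
        rcases hbase with hb | hb
        · exact ih (Or.inl (hb.trans hadj.reachable))
        · exact ih (Or.inr (hb.trans hadj.reachable))
  exact aux p (Or.inl (Reachable.refl _))

/-- A bridge induces a minimal cut whose value is the weight of the bridge. -/
lemma bridge_gives_cut [Fintype V] [DecidableEq V] (hG : G.Connected) (w : Sym2 V → ℝ)
    {x y : V} (he : G.IsBridge s(x, y)) :
    ∃ K : Set V, IsMinimalCutOn G Set.univ K ∧ cutValueOn G w Set.univ K = w s(x, y) := by
  set H := G.deleteEdges {s(x, y)} with hH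
  set K : Set V := {u | H.Reachable x u} with hK
  have hle : H ≤ G := G.deleteEdges_le _
  have hxK : x ∈ K := Reachable.refl _
  have hyK : y ∉ K := fun h => isBridge_iff.mp he h
  have hcompl : Set.univ \ K = {u | H.Reachable y u} := by
    ext u
    simp only [Set.mem_diff, Set.mem_univ, true_and, hK, Set.mem_setOf_eq]
    constructor
    · intro hu
      rcases bridge_cover hG he u with h | h
      · exact absurd h hu
      · exact h
    · intro hu hx'
      exact isBridge_iff.mp he (hx'.trans hu.symm)
  have hyK' : y ∈ Set.univ \ K := ⟨trivial, hyK⟩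
  refine ⟨K, ⟨fun _ _ => trivial, ⟨x, hxK⟩, ⟨y, hyK'⟩, ?_, ?_⟩, ?_⟩
  · rw [connected_iff]
    refine ⟨?_, ⟨⟨x, hxK⟩⟩⟩
    rintro ⟨u, hu⟩ ⟨u', hu'⟩
    have h1 := induce_reach_of_le_reach hle (hu : H.Reachable x u) (fun m hm => hm) hu
    have h2 := induce_reach_of_le_reach hle (hu' : H.Reachable x u') (fun m hm => hm) hu'
    exact h1.symm.trans h2
  · rw [connected_iff, hcompl]
    refine ⟨?_, ⟨⟨y, Reachable.refl _⟩⟩⟩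
    rintro ⟨u, hu⟩ ⟨u', hu'⟩
    have h1 := induce_reach_of_le_reach hle (hu : H.Reachable y u) (fun m hm => hm) hu
    have h2 := induce_reach_of_le_reach hle (hu' : H.Reachable y u') (fun m hm => hm) hu'
    exact h1.symm.trans h2
  · refine cutValueOn_eq_single w fun e' => ?_
    constructor
    · rintro ⟨hee, a, haK, b, hbK, rfl⟩
      rw [mem_edgeSet] at hee
      by_contra hne
      have hadj : H.Adj a b := by
        rw [hH, deleteEdges_adj]; exact ⟨hee, by simpa using hne⟩
      rw [hcompl] at hbK
      exact isBridge_iff.mp he ((haK.trans hadj.reachable).trans hbK.symm)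
    · rintro rfl
      exact ⟨G.mem_edgeSet.mpr (he.reachable_iff_adj.mp (hG.preconnected x y)), x, hxK, y, hyK', rfl⟩

/-- A minimal cut crossed by a bridge has cut value the weight of the bridge. -/
lemma cutValue_of_bridge_cross [Fintype V] [DecidableEq V] (w : Sym2 V → ℝ) {K : Set V}
    (hcut : IsMinimalCutOn G Set.univ K) {x y : V} (hx : x ∈ K) (hy : y ∉ K)
    (he : G.IsBridge s(x, y)) (hxy : G.Adj x y) : cutValueOn G w Set.univ K = w s(x, y) := by
  have hK : ∀ u, u ∈ K → (G.deleteEdges {s(x, y)}).Reachable x u := by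
    intro u hu
    have hr := hcut.2.2.2.1.preconnected ⟨x, hx⟩ ⟨u, hu⟩
    obtain ⟨q⟩ := hr
    refine ⟨(q.map (Embedding.induce K).toHom).toDeleteEdges _ ?_⟩
    intro e' he' h'
    rw [Set.mem_singleton_iff] at h'
    subst h'
    have hy' : y ∈ (q.map (Embedding.induce K).toHom).support :=
      Walk.snd_mem_support_of_mem_edges _ he'
    rw [Walk.support_map] at hy'
    obtain ⟨⟨m, hm⟩, _, rfl⟩ := List.mem_map.mp hy'
    exact hy hm
  have hL : ∀ u, u ∉ K → (G.deleteEdges {s(x, y)}).Reachable y u := by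
    intro u hu
    have hr := hcut.2.2.2.2.preconnected ⟨y, ⟨trivial, hy⟩⟩ ⟨u, ⟨trivial, hu⟩⟩
    obtain ⟨q⟩ := hr
    refine ⟨(q.map (Embedding.induce _).toHom).toDeleteEdges _ ?_⟩
    intro e' he' h'
    rw [Set.mem_singleton_iff] at h'
    subst h'
    have hx' : x ∈ (q.map (Embedding.induce _).toHom).support :=
      Walk.fst_mem_support_of_mem_edges _ he'
    rw [Walk.support_map] at hx'
    obtain ⟨⟨m, hm⟩, _, rfl⟩ := List.mem_map.mp hx'
    exact hm.2 hx
  refine cutValueOn_eq_single w fun e' => ?_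
  constructor
  · rintro ⟨hee, a, haK, b, hbK, rfl⟩
    rw [mem_edgeSet] at hee
    by_contra hne
    have hadj : (G.deleteEdges {s(x, y)}).Adj a b := by
      rw [deleteEdges_adj]; exact ⟨hee, by simpa using hne⟩
    exact isBridge_iff.mp he
      (((hK a haK).trans hadj.reachable).trans (hL b hbK.2).symm)
  · rintro rfl
    exact ⟨G.mem_edgeSet.mpr hxy, x, hx, y, ⟨trivial, hy⟩, rfl⟩
/-- A minimal cut of a bridge-free component extends to a minimal cut of `G`
with the same cut value. -/
lemma comp_cut_extends [Fintype V] [DecidableEq V] (hG : G.Connected) (w : Sym2 V → ℝ)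
    {v : V} {K : Set V}
    (hcut : IsMinimalCutOn G {u | (G.deleteEdges {e | G.IsBridge e}).Reachable v u} K) :
    ∃ K' : Set V, IsMinimalCutOn G Set.univ K' ∧
      cutValueOn G w Set.univ K' =
        cutValueOn G w {u | (G.deleteEdges {e | G.IsBridge e}).Reachable v u} K := by
  set S := {u | (G.deleteEdges {e | G.IsBridge e}).Reachable v u} with hS
  obtain ⟨hKS, ⟨k0, hk0⟩, ⟨l0, hl0⟩, hKc, hLc⟩ := hcut
  set F : Set (Sym2 V) := {e | e ∈ G.edgeSet ∧ ∃ x ∈ K, ∃ y ∈ S \ K, e = s(x, y)} with hF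
  set H := G.deleteEdges F with hH
  have hle : H ≤ G := G.deleteEdges_le _
  have hFS : ∀ a c : V, s(a, c) ∈ F → c ∈ S := by
    rintro a c ⟨_, x, hx, y, hy, hxy⟩
    rcases Sym2.eq_iff.mp hxy with ⟨rfl, rfl⟩ | ⟨rfl, rfl⟩
    · exact hy.1
    · exact hKS hx
  have hcov : ∀ u, ∃ a ∈ S, H.Reachable a u := by
    intro u
    obtain ⟨p⟩ := hG.preconnected v u
    have aux : ∀ {a u : V} (_ : G.Walk a u),
        (∃ s0 ∈ S, H.Reachable s0 a) → ∃ s0 ∈ S, H.Reachable s0 u := by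
      intro a u p
      induction p with
      | nil => exact id
      | cons h q ih =>
        rename_i a c d
        intro hbase
        by_cases hFm : s(a, c) ∈ F
        · exact ih ⟨c, hFS a c hFm, Reachable.refl _⟩
        · have hadj : H.Adj a c := by rw [hH, deleteEdges_adj]; exact ⟨h, hFm⟩
          obtain ⟨s0, hs0, hr⟩ := hbase
          exact ih ⟨s0, hs0, hr.trans hadj.reachable⟩
    exact aux p ⟨v, Reachable.refl _, Reachable.refl _⟩
  have hdisj : ∀ a ∈ K, ∀ b ∈ S \ K, ¬H.Reachable a b := by
    intro a ha b hb hr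
    obtain ⟨p, hp, hpe⟩ := exists_path_of_le_reach hle hr
    have hpF : ∀ e ∈ p.edges, e ∉ F := by
      intro e hep
      have h' := hpe e hep
      rw [hH, edgeSet_deleteEdges] at h'
      exact h'.2
    have hrB : (G.deleteEdges {e | G.IsBridge e}).Reachable a b :=
      ((hKS ha : (G.deleteEdges {e | G.IsBridge e}).Reachable v a)).symm.trans hb.1
    have hnb : ∀ e ∈ p.edges, ¬G.IsBridge e := no_bridge_of_path_reach hrB p hp
    have hsupS : ∀ m ∈ p.support, m ∈ S := fun m hm =>
      ((hKS ha : (G.deleteEdges {e | G.IsBridge e}).Reachable v a)).trans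
        (support_reach_of_no_bridge p hnb m hm)
    have stay : ∀ {a c : V} (q : G.Walk a c), a ∈ K → (∀ m ∈ q.support, m ∈ S) →
        (∀ e ∈ q.edges, e ∉ F) → c ∈ K := by
      intro a c q
      induction q with
      | nil => intro h _ _; exact h
      | cons h q ih =>
        rename_i a c d
        intro haK hsup hFq
        by_cases hcK : c ∈ K
        · exact ih hcK (fun m hm => hsup m (by simp [hm])) (fun e he' => hFq e (by simp [he']))
        · exact absurd ⟨G.mem_edgeSet.mpr h, a, haK, c, ⟨hsup c (by simp), hcK⟩, rfl⟩
            (hFq s(a, c) (by simp))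
    exact hb.2 (stay p ha hsupS hpF)
  set K' := {u | ∃ a ∈ K, H.Reachable a u} with hK'
  have hKK' : K ⊆ K' := fun a ha => ⟨a, ha, Reachable.refl _⟩
  have hcompl : Set.univ \ K' = {u | ∃ b ∈ S \ K, H.Reachable b u} := by
    ext u
    simp only [Set.mem_diff, Set.mem_univ, true_and, hK', Set.mem_setOf_eq]
    constructor
    · intro hu
      obtain ⟨a, haS, hra⟩ := hcov u
      by_cases haK : a ∈ K
      · exact absurd ⟨a, haK, hra⟩ hu
      · exact ⟨a, ⟨haS, haK⟩, hra⟩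
    · rintro ⟨b, hb, hrb⟩ ⟨a, ha, hra⟩
      exact hdisj a ha b hb (hra.trans hrb.symm)
  have hl0' : l0 ∈ Set.univ \ K' := by
    rw [hcompl]; exact ⟨l0, hl0, Reachable.refl _⟩
  refine ⟨K', ⟨fun _ _ => trivial, ⟨k0, hKK' hk0⟩, ⟨l0, hl0'⟩, ?_, ?_⟩, ?_⟩
  · rw [connected_iff]
    refine ⟨?_, ⟨⟨k0, hKK' hk0⟩⟩⟩
    rintro ⟨u, hu⟩ ⟨u', hu'⟩
    obtain ⟨a, ha, hra⟩ := hu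
    obtain ⟨a', ha', hra'⟩ := hu'
    have h1 : (G.induce K').Reachable ⟨a, hKK' ha⟩ ⟨u, ⟨a, ha, hra⟩⟩ :=
      induce_reach_of_le_reach (s := K') hle hra (fun m hm => ⟨a, ha, hm⟩) ⟨a, ha, hra⟩
    have h2 : (G.induce K').Reachable ⟨a', hKK' ha'⟩ ⟨u', ⟨a', ha', hra'⟩⟩ :=
      induce_reach_of_le_reach (s := K') hle hra' (fun m hm => ⟨a', ha', hm⟩) ⟨a', ha', hra'⟩
    have h3 : (G.induce K').Reachable ⟨a, hKK' ha⟩ ⟨a', hKK' ha'⟩ :=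
      Reachable.map (induceHom Hom.id (fun z hz => hKK' hz))
        (hKc.preconnected ⟨a, ha⟩ ⟨a', ha'⟩)
    exact (h1.symm.trans h3).trans h2
  · rw [connected_iff, hcompl]
    have hSK' : S \ K ⊆ {u | ∃ b ∈ S \ K, H.Reachable b u} :=
      fun b hb => ⟨b, hb, Reachable.refl _⟩
    refine ⟨?_, ⟨⟨l0, hSK' hl0⟩⟩⟩
    rintro ⟨u, hu⟩ ⟨u', hu'⟩
    obtain ⟨b, hb, hrb⟩ := hu
    obtain ⟨b', hb', hrb'⟩ := hu'
    have h1 : (G.induce {u | ∃ b ∈ S \ K, H.Reachable b u}).Reachable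
        ⟨b, hSK' hb⟩ ⟨u, ⟨b, hb, hrb⟩⟩ :=
      induce_reach_of_le_reach (s := {u | ∃ b ∈ S \ K, H.Reachable b u}) hle hrb (fun m hm => ⟨b, hb, hm⟩) ⟨b, hb, hrb⟩
    have h2 : (G.induce {u | ∃ b ∈ S \ K, H.Reachable b u}).Reachable
        ⟨b', hSK' hb'⟩ ⟨u', ⟨b', hb', hrb'⟩⟩ :=
      induce_reach_of_le_reach (s := {u | ∃ b ∈ S \ K, H.Reachable b u}) hle hrb' (fun m hm => ⟨b', hb', hm⟩) ⟨b', hb', hrb'⟩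
    have h3 : (G.induce {u | ∃ b ∈ S \ K, H.Reachable b u}).Reachable
        ⟨b, hSK' hb⟩ ⟨b', hSK' hb'⟩ :=
      Reachable.map (induceHom Hom.id (fun z hz => hSK' hz))
        (hLc.preconnected ⟨b, hb⟩ ⟨b', hb'⟩)
    exact (h1.symm.trans h3).trans h2
  · refine cutValueOn_congr w fun e' hee => ?_
    constructor
    · rintro ⟨a, haK', b, hbK', rfl⟩
      by_cases hFm : s(a, b) ∈ F
      · obtain ⟨_, x, hx, y, hy, hxy⟩ := hFm
        exact ⟨x, hx, y, hy, hxy⟩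
      · exfalso
        have hadj : H.Adj a b := by
          rw [hH, deleteEdges_adj]
          exact ⟨G.mem_edgeSet.mp hee, hFm⟩
        obtain ⟨a0, ha0, hra⟩ := haK'
        exact hbK'.2 ⟨a0, ha0, hra.trans hadj.reachable⟩
    · rintro ⟨x, hx, y, hy, hxy⟩
      refine ⟨x, hKK' hx, y, ⟨trivial, ?_⟩, hxy⟩
      rintro ⟨a, ha, hra⟩
      exact hdisj a ha y hy hra
/-- Reachability in an induced subgraph avoiding an edge with an endpoint outside. -/
lemma induce_reach_delete {s : Set V} {p q : V} (hout : p ∉ s ∨ q ∉ s) {a b : ↑s}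
    (h : (G.induce s).Reachable a b) : (G.deleteEdges {s(p, q)}).Reachable a.1 b.1 := by
  obtain ⟨r, hr, hsup⟩ := exists_path_of_induce_reach h
  refine ⟨r.toDeleteEdges _ ?_⟩
  intro e he hmem
  rw [Set.mem_singleton_iff] at hmem
  subst hmem
  rcases hout with h' | h'
  · exact h' (hsup p (r.fst_mem_support_of_mem_edges he))
  · exact h' (hsup q (r.snd_mem_support_of_mem_edges he))

/-- A minimal cut of `G` crossed by no bridge restricts to a minimal cut of the
bridge-free component containing a crossing edge, with the same cut value. -/
lemma cut_restricts [Fintype V] [DecidableEq V] (hG : G.Connected) (w : Sym2 V → ℝ)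
    {K0 : Set V} (hcut : IsMinimalCutOn G Set.univ K0)
    (hnb : ∀ x ∈ K0, ∀ y, y ∉ K0 → G.Adj x y → ¬G.IsBridge s(x, y))
    {x0 y0 : V} (hx0 : x0 ∈ K0) (hy0 : y0 ∉ K0) (hadj0 : G.Adj x0 y0) :
    IsMinimalCutOn G {u | (G.deleteEdges {e | G.IsBridge e}).Reachable x0 u}
        (K0 ∩ {u | (G.deleteEdges {e | G.IsBridge e}).Reachable x0 u}) ∧
      cutValueOn G w {u | (G.deleteEdges {e | G.IsBridge e}).Reachable x0 u}
        (K0 ∩ {u | (G.deleteEdges {e | G.IsBridge e}).Reachable x0 u}) =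
        cutValueOn G w Set.univ K0 := by
  set S := {u | (G.deleteEdges {e | G.IsBridge e}).Reachable x0 u} with hSdef
  set K1 := K0 ∩ S with hK1
  obtain ⟨-, -, -, hKc, hLc⟩ := hcut
  have hSK : S \ K1 = S \ K0 := by
    ext m
    simp only [hK1, Set.mem_diff, Set.mem_inter_iff]
    tauto
  have hx0S : x0 ∈ S := Reachable.refl _
  -- the key claim: crossing edges lie inside the component S
  have key : ∀ a ∈ K0, ∀ b, b ∉ K0 → G.Adj a b → a ∈ S ∧ b ∈ S := by
    intro a ha b hb hab
    have hxa : ∀ e1, G.IsBridge e1 → (G.deleteEdges {e1}).Reachable x0 a := by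
      intro e1 hb1
      induction e1 using Sym2.ind with
      | _ p q =>
      have hpq : (p ∈ K0 ∧ q ∈ K0) ∨ (p ∉ K0 ∧ q ∉ K0) := by
        by_cases hp : p ∈ K0 <;> by_cases hq : q ∈ K0
        · exact Or.inl ⟨hp, hq⟩
        · exact absurd hb1 (hnb p hp q hq (hb1.reachable_iff_adj.mp (hG.preconnected p q)))
        · refine absurd hb1 ?_
          have := hnb q hq p hp (hb1.reachable_iff_adj.mp (hG.preconnected p q)).symm
          rwa [Sym2.eq_swap] at this
        · exact Or.inr ⟨hp, hq⟩
      rcases hpq with ⟨hp, hq⟩ | ⟨hp, hq⟩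
      · -- both endpoints of the bridge in K0 : connect through the complement
        have h1 : (G.deleteEdges {s(p, q)}).Reachable y0 b :=
          induce_reach_delete (Or.inl (fun h => h.2 hp))
            (hLc.preconnected ⟨y0, ⟨trivial, hy0⟩⟩ ⟨b, ⟨trivial, hb⟩⟩)
        have h2 : (G.deleteEdges {s(p, q)}).Adj x0 y0 := by
          rw [deleteEdges_adj]
          refine ⟨hadj0, ?_⟩
          simp only [Set.mem_singleton_iff]
          intro h'
          rcases Sym2.eq_iff.mp h' with ⟨rfl, rfl⟩ | ⟨rfl, rfl⟩
          · exact hy0 hq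
          · exact hy0 hp
        have h3 : (G.deleteEdges {s(p, q)}).Adj a b := by
          rw [deleteEdges_adj]
          refine ⟨hab, ?_⟩
          simp only [Set.mem_singleton_iff]
          intro h'
          rcases Sym2.eq_iff.mp h' with ⟨rfl, rfl⟩ | ⟨rfl, rfl⟩
          · exact hb hq
          · exact hb hp
        exact (h2.reachable.trans h1).trans h3.reachable.symm
      · -- both endpoints outside K0 : connect through K0
        exact induce_reach_delete (Or.inl hp) (hKc.preconnected ⟨x0, hx0⟩ ⟨a, ha⟩)
    have haS : a ∈ S := reach_deleteBridges_of_forall hG hxa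
    have hbS : b ∈ S := by
      refine haS.trans (Adj.reachable ?_)
      rw [deleteEdges_adj]
      exact ⟨hab, hnb a ha b hb hab⟩
    exact ⟨haS, hbS⟩
  have hy0S : y0 ∈ S := (key x0 hx0 y0 hy0 hadj0).2
  -- connectivity of the restricted pieces
  have hKc1 : (G.induce K1).Connected := by
    rw [connected_iff]
    refine ⟨?_, ⟨⟨x0, hx0, hx0S⟩⟩⟩
    rintro ⟨a, haK, haS⟩ ⟨b, hbK, hbS⟩
    obtain ⟨p, hp, hsup⟩ :=
      exists_path_of_induce_reach (hKc.preconnected ⟨a, haK⟩ ⟨b, hbK⟩)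
    have hrB : (G.deleteEdges {e | G.IsBridge e}).Reachable a b :=
      (haS : (G.deleteEdges {e | G.IsBridge e}).Reachable x0 a).symm.trans hbS
    have hnbp := no_bridge_of_path_reach hrB p hp
    exact reach_induce_of_walk (s := K1) p
      (fun m hm => ⟨hsup m hm,
        (haS : (G.deleteEdges {e | G.IsBridge e}).Reachable x0 a).trans
          (support_reach_of_no_bridge p hnbp m hm)⟩) _ _
  have hLc1 : (G.induce (S \ K1)).Connected := by
    rw [hSK, connected_iff]
    refine ⟨?_, ⟨⟨y0, hy0S, hy0⟩⟩⟩
    rintro ⟨a, haS, haK⟩ ⟨b, hbS, hbK⟩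
    obtain ⟨p, hp, hsup⟩ :=
      exists_path_of_induce_reach (hLc.preconnected ⟨a, ⟨trivial, haK⟩⟩ ⟨b, ⟨trivial, hbK⟩⟩)
    have hrB : (G.deleteEdges {e | G.IsBridge e}).Reachable a b :=
      (haS : (G.deleteEdges {e | G.IsBridge e}).Reachable x0 a).symm.trans hbS
    have hnbp := no_bridge_of_path_reach hrB p hp
    exact reach_induce_of_walk (s := S \ K0) p
      (fun m hm => ⟨(haS : (G.deleteEdges {e | G.IsBridge e}).Reachable x0 a).trans
          (support_reach_of_no_bridge p hnbp m hm), (hsup m hm).2⟩) _ _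
  refine ⟨⟨Set.inter_subset_right, ⟨x0, hx0, hx0S⟩, ⟨y0, by rw [hSK]; exact ⟨hy0S, hy0⟩⟩,
      hKc1, hLc1⟩, ?_⟩
  refine cutValueOn_congr w fun e' hee => ?_
  constructor
  · rintro ⟨x, hx, y, hy, hxy⟩
    rw [hSK] at hy
    exact ⟨x, hx.1, y, ⟨trivial, hy.2⟩, hxy⟩
  · rintro ⟨x, hx, y, hy, rfl⟩
    have hk := key x hx y hy.2 (G.mem_edgeSet.mp hee)
    refine ⟨x, ⟨hx, hk.1⟩, y, ?_, rfl⟩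
    rw [hSK]
    exact ⟨hk.2, hy.2⟩

end Helpers

/-- Let `G` be a finite connected simple graph with positive edge weights,
let `B` be the set of all bridges of `G`, and let `G1, ..., Gt` be the connected components of
the graph obtained from `G` by deleting all edges of `B` (for each vertex `v`, the component of
`v` is `{u | (G.deleteEdges B).Reachable v u}`). Then the maximum minimal cut value of `G`
equals the maximum of the set consisting of the weights of the bridges together with, for each
component, all cut values of minimal cuts of that component. -/
theorem maxMinimalCut_allBridges_decomposition {V : Type*} [Fintype V] [DecidableEq V]
    (G : SimpleGraph V) (hG : G.Connected)
    (w : Sym2 V → ℝ) (hw : ∀ e ∈ G.edgeSet, 0 < w e) :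
    sSup {r : ℝ | ∃ K : Set V,
        IsMinimalCutOn G Set.univ K ∧ r = cutValueOn G w Set.univ K} =
      sSup ({r : ℝ | ∃ e : Sym2 V, G.IsBridge e ∧ r = w e} ∪
        {r : ℝ | ∃ v : V, ∃ K : Set V,
            IsMinimalCutOn G {u | (G.deleteEdges {e | G.IsBridge e}).Reachable v u} K ∧
            r = cutValueOn G w {u | (G.deleteEdges {e | G.IsBridge e}).Reachable v u} K}) := by
  apply congrArg
  ext r
  simp only [Set.mem_setOf_eq, Set.mem_union]
  constructor
  · rintro ⟨K0, hcut, rfl⟩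
    by_cases hbr : ∃ x ∈ K0, ∃ y, y ∉ K0 ∧ G.Adj x y ∧ G.IsBridge s(x, y)
    · obtain ⟨x, hx, y, hy, hadj, hb⟩ := hbr
      exact Or.inl ⟨s(x, y), hb, cutValue_of_bridge_cross w hcut hx hy hb hadj⟩
    · push_neg at hbr
      obtain ⟨x0, hx0, y0, hy0, hadj0⟩ := exists_crossing_edge hG hcut.2.1 hcut.2.2.1
      obtain ⟨hc, hv⟩ := cut_restricts hG w hcut hbr hx0 hy0 hadj0
      exact Or.inr ⟨x0, _, hc, hv.symm⟩
  · rintro (⟨e, hb, rfl⟩ | ⟨v, K, hcut, rfl⟩)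
    · induction e using Sym2.ind with
      | _ x y =>
        obtain ⟨K, hc, hv⟩ := bridge_gives_cut hG w hb
        exact ⟨K, hc, hv.symm⟩
    · obtain ⟨K', hc, hv⟩ := comp_cut_extends hG w hcut
      exact ⟨K', hc, hv.symm⟩
end

section
/- Let n >= 2, let H be an n-by-n Hermitian matrix with eigenvalues lambda_1 <= ... <= lambda_n, let u be a nonzero vector in C^n, and let Z = H + u u* (the rank-one update by the outer product of u with itself), with eigenvalues mu_1 <= ... <= mu_n. Then the eigenvalues interlace: lambda_1 <= mu_1 <= lambda_2 <= mu_2 <= ... <= lambda_n <= mu_n. -/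
/-- The eigenvalues of a Hermitian matrix, listed in nondecreasing order. -/
noncomputable def sortedEigenvalues {n : ℕ} {𝕜 : Type*} [RCLike 𝕜]
    {A : Matrix (Fin n) (Fin n) 𝕜} (hA : A.IsHermitian) : Fin n → ℝ :=
  hA.eigenvalues ∘ Tuple.sort hA.eigenvalues

open Matrix Finset Module

namespace InterlaceAux

variable {n : ℕ}

lemma coeff_eq_zero (b : OrthonormalBasis (Fin n) ℂ (EuclideanSpace ℂ (Fin n)))
    (S : Set (Fin n)) {j : Fin n} (hj : j ∉ S) {x : EuclideanSpace ℂ (Fin n)}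
    (hx : x ∈ Submodule.span ℂ (b '' S)) :
    (inner ℂ (b j) x : ℂ) = 0 := by
  induction hx using Submodule.span_induction with
  | mem y hy =>
      obtain ⟨i, hi, rfl⟩ := hy
      exact b.orthonormal.2 (by rintro rfl; exact hj hi)
  | zero => simp
  | add y z _ _ hy hz => simp [inner_add_right, hy, hz]
  | smul c y _ hy => simp [inner_smul_right, hy]

lemma re_inner_eq_sum (b : OrthonormalBasis (Fin n) ℂ (EuclideanSpace ℂ (Fin n)))
    (T : EuclideanSpace ℂ (Fin n) →ₗ[ℂ] EuclideanSpace ℂ (Fin n)) (μ : Fin n → ℝ)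
    (hT : ∀ j, T (b j) = ((μ j : ℂ)) • b j) (x : EuclideanSpace ℂ (Fin n)) :
    (inner ℂ x (T x) : ℂ).re = ∑ i, μ i * ‖(inner ℂ (b i) x : ℂ)‖ ^ 2 := by
  have hTx : T x = ∑ i, ((inner ℂ (b i) x : ℂ) * (μ i : ℂ)) • b i := by
    conv_lhs => rw [← b.sum_repr' x]
    rw [map_sum]
    refine Finset.sum_congr rfl fun i _ => ?_
    rw [LinearMap.map_smul, hT, smul_smul]
  rw [hTx, inner_sum, Complex.re_sum]
  refine Finset.sum_congr rfl fun i _ => ?_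
  rw [inner_smul_right, ← inner_conj_symm x (b i)]
  have h1 : (inner ℂ (b i) x : ℂ) * (μ i : ℂ) * (starRingEnd ℂ) (inner ℂ (b i) x)
      = (μ i : ℂ) * ((inner ℂ (b i) x : ℂ) * (starRingEnd ℂ) (inner ℂ (b i) x)) := by ring
  rw [h1, Complex.mul_conj, ← Complex.ofReal_mul, Complex.ofReal_re]
  simp [Complex.normSq_eq_norm_sq, ← Complex.ofReal_pow]

lemma norm_sq_eq_sum (b : OrthonormalBasis (Fin n) ℂ (EuclideanSpace ℂ (Fin n)))
    (x : EuclideanSpace ℂ (Fin n)) :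
    ‖x‖ ^ 2 = ∑ i, ‖(inner ℂ (b i) x : ℂ)‖ ^ 2 := by
  have h := re_inner_eq_sum b LinearMap.id (fun _ => 1) (by simp) x
  simp only [LinearMap.id_apply, one_mul] at h
  have h0 : (inner ℂ x x : ℂ).re = ‖x‖ ^ 2 := by
    simpa using inner_self_eq_norm_sq (𝕜 := ℂ) x
  rw [← h0, h]

lemma quad_le (b : OrthonormalBasis (Fin n) ℂ (EuclideanSpace ℂ (Fin n)))
    (T : EuclideanSpace ℂ (Fin n) →ₗ[ℂ] EuclideanSpace ℂ (Fin n)) (μ : Fin n → ℝ)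
    (hT : ∀ j, T (b j) = ((μ j : ℂ)) • b j) (S : Set (Fin n)) (C : ℝ)
    (hC : ∀ j ∈ S, μ j ≤ C) {x : EuclideanSpace ℂ (Fin n)}
    (hx : x ∈ Submodule.span ℂ (b '' S)) :
    (inner ℂ x (T x) : ℂ).re ≤ C * ‖x‖ ^ 2 := by
  rw [re_inner_eq_sum b T μ hT x, norm_sq_eq_sum b x, Finset.mul_sum]
  refine Finset.sum_le_sum fun i _ => ?_
  by_cases hi : i ∈ S
  · exact mul_le_mul_of_nonneg_right (hC i hi) (by positivity)
  · simp [coeff_eq_zero b S hi hx]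

lemma le_quad (b : OrthonormalBasis (Fin n) ℂ (EuclideanSpace ℂ (Fin n)))
    (T : EuclideanSpace ℂ (Fin n) →ₗ[ℂ] EuclideanSpace ℂ (Fin n)) (μ : Fin n → ℝ)
    (hT : ∀ j, T (b j) = ((μ j : ℂ)) • b j) (S : Set (Fin n)) (C : ℝ)
    (hC : ∀ j ∈ S, C ≤ μ j) {x : EuclideanSpace ℂ (Fin n)}
    (hx : x ∈ Submodule.span ℂ (b '' S)) :
    C * ‖x‖ ^ 2 ≤ (inner ℂ x (T x) : ℂ).re := by
  rw [re_inner_eq_sum b T μ hT x, norm_sq_eq_sum b x, Finset.mul_sum]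
  refine Finset.sum_le_sum fun i _ => ?_
  by_cases hi : i ∈ S
  · exact mul_le_mul_of_nonneg_right (hC i hi) (by positivity)
  · simp [coeff_eq_zero b S hi hx]

lemma finrank_add_le (V W : Submodule ℂ (EuclideanSpace ℂ (Fin n))) :
    finrank ℂ V + finrank ℂ W ≤ finrank ℂ ↥(V ⊓ W) + n := by
  have h1 := Submodule.finrank_sup_add_finrank_inf_eq V W
  have h2 : finrank ℂ ↥(V ⊔ W) ≤ n := by
    simpa using Submodule.finrank_le (V ⊔ W)
  omega

lemma finrank_span_orthonormal (b : OrthonormalBasis (Fin n) ℂ (EuclideanSpace ℂ (Fin n)))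
    (S : Finset (Fin n)) :
    finrank ℂ ↥(Submodule.span ℂ (b '' (S : Set (Fin n)))) = S.card := by
  classical
  have h1 : LinearIndependent ℂ (fun i : (S : Set (Fin n)) => b i) :=
    b.orthonormal.linearIndependent.comp _ Subtype.val_injective
  have h2 := finrank_span_eq_card h1
  rw [← Set.image_eq_range] at h2
  simpa using h2

lemma exists_ne_zero_mem (V : Submodule ℂ (EuclideanSpace ℂ (Fin n)))
    (h : 0 < finrank ℂ V) : ∃ x : EuclideanSpace ℂ (Fin n), x ≠ 0 ∧ x ∈ V := by
  obtain ⟨⟨x, hx⟩, hne⟩ := Module.finrank_pos_iff_exists_ne_zero.mp h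
  exact ⟨x, by simpa using hne, hx⟩

lemma re_inner_rankOne (u : Fin n → ℂ) (x : EuclideanSpace ℂ (Fin n)) :
    (inner ℂ x (Matrix.toEuclideanLin (vecMulVec u (star u)) x) : ℂ).re
      = ‖(inner ℂ ((WithLp.equiv 2 (Fin n → ℂ)).symm u) x : ℂ)‖ ^ 2 := by
  have key : ∀ i, (vecMulVec u (star u) *ᵥ ⇑x) i
      = (∑ j, (starRingEnd ℂ) (u j) * x j) * u i := by
    intro i
    simp only [mulVec, dotProduct, vecMulVec_apply, Pi.star_apply, Finset.sum_mul,
      Complex.star_def]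
    exact Finset.sum_congr rfl fun j _ => by ring
  have hs : (inner ℂ ((WithLp.equiv 2 (Fin n → ℂ)).symm u) x : ℂ)
      = ∑ j, (starRingEnd ℂ) (u j) * x j := by
    simp [PiLp.inner_apply, RCLike.inner_apply, WithLp.equiv_symm_apply, PiLp.toLp_apply, mul_comm]
  have hmv : Matrix.toEuclideanLin (vecMulVec u (star u)) x
      = (inner ℂ ((WithLp.equiv 2 (Fin n → ℂ)).symm u) x : ℂ) • (WithLp.equiv 2 (Fin n → ℂ)).symm u := by
    refine PiLp.ext fun i => ?_
    show (vecMulVec u (star u) *ᵥ ⇑x) i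
      = ((inner ℂ ((WithLp.equiv 2 (Fin n → ℂ)).symm u) x : ℂ) • (WithLp.equiv 2 (Fin n → ℂ)).symm u) i
    rw [key i, hs]
    simp [WithLp.equiv_symm_apply, PiLp.toLp_apply]
  rw [hmv, inner_smul_right, ← inner_conj_symm x ((WithLp.equiv 2 (Fin n → ℂ)).symm u),
    Complex.mul_conj]
  simp [Complex.normSq_eq_norm_sq, ← Complex.ofReal_pow]

end InterlaceAux

open InterlaceAux in
/-- **Interlacing for a rank-one Hermitian update.**
Let `n ≥ 2`, let `H` be an `n × n` Hermitian matrix with eigenvalues `λ₁ ≤ ... ≤ λₙ`, let `u`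
be a nonzero vector in `ℂⁿ`, and let `Z = H + u uᴴ` (the rank-one update by the outer product
of `u` with itself), with eigenvalues `μ₁ ≤ ... ≤ μₙ`. Then the eigenvalues interlace:
`λ₁ ≤ μ₁ ≤ λ₂ ≤ μ₂ ≤ ... ≤ λₙ ≤ μₙ`. -/
theorem eigenvalues_interlace_rankOne_update {n : ℕ} (hn : 2 ≤ n)
    (H : Matrix (Fin n) (Fin n) ℂ) (hH : H.IsHermitian)
    (u : Fin n → ℂ) (hu : u ≠ 0)
    (hZ : (H + Matrix.vecMulVec u (star u)).IsHermitian) :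
    (∀ i : Fin n, sortedEigenvalues hH i ≤ sortedEigenvalues hZ i) ∧
    (∀ i : Fin n, ∀ h : (i : ℕ) + 1 < n,
      sortedEigenvalues hZ i ≤ sortedEigenvalues hH ⟨(i : ℕ) + 1, h⟩) := by
  classical
  set Z := H + Matrix.vecMulVec u (star u) with hZdef
  set σH := Tuple.sort hH.eigenvalues with hσH
  set σZ := Tuple.sort hZ.eigenvalues with hσZ
  set bH : OrthonormalBasis (Fin n) ℂ (EuclideanSpace ℂ (Fin n)) :=
    hH.eigenvectorBasis.reindex σH.symm with hbHdef
  set bZ : OrthonormalBasis (Fin n) ℂ (EuclideanSpace ℂ (Fin n)) :=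
    hZ.eigenvectorBasis.reindex σZ.symm with hbZdef
  set TH := Matrix.toEuclideanLin H with hTHdef
  set TZ := Matrix.toEuclideanLin Z with hTZdef
  have hlam : Monotone (sortedEigenvalues hH) := Tuple.monotone_sort hH.eigenvalues
  have hmu : Monotone (sortedEigenvalues hZ) := Tuple.monotone_sort hZ.eigenvalues
  have hbH : ∀ j, TH (bH j) = ((sortedEigenvalues hH j : ℂ)) • bH j := by
    intro j
    have key : H *ᵥ ⇑(bH j) = sortedEigenvalues hH j • ⇑(bH j) := by
      simpa [hbHdef, OrthonormalBasis.reindex_apply, sortedEigenvalues, hσH] using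
        hH.mulVec_eigenvectorBasis (σH j)
    refine PiLp.ext fun i => ?_
    show (H *ᵥ ⇑(bH j)) i = (((sortedEigenvalues hH j : ℂ)) • bH j) i
    rw [key]
    simp [Complex.real_smul]
  have hbZ : ∀ j, TZ (bZ j) = ((sortedEigenvalues hZ j : ℂ)) • bZ j := by
    intro j
    have key : Z *ᵥ ⇑(bZ j) = sortedEigenvalues hZ j • ⇑(bZ j) := by
      simpa [hbZdef, OrthonormalBasis.reindex_apply, sortedEigenvalues, hσZ] using
        hZ.mulVec_eigenvectorBasis (σZ j)
    refine PiLp.ext fun i => ?_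
    show (Z *ᵥ ⇑(bZ j)) i = (((sortedEigenvalues hZ j : ℂ)) • bZ j) i
    rw [key]
    simp [Complex.real_smul]
  set u' : EuclideanSpace ℂ (Fin n) := (WithLp.equiv 2 (Fin n → ℂ)).symm u with hu'def
  have hTZx : ∀ x : EuclideanSpace ℂ (Fin n),
      (inner ℂ x (TZ x) : ℂ).re = (inner ℂ x (TH x) : ℂ).re + ‖(inner ℂ u' x : ℂ)‖ ^ 2 := by
    intro x
    have hadd : TZ = TH + Matrix.toEuclideanLin (Matrix.vecMulVec u (star u)) := by
      rw [hTZdef, hTHdef, hZdef, map_add]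
    rw [hadd]
    simp only [LinearMap.add_apply, inner_add_right, Complex.add_re]
    rw [re_inner_rankOne]
  constructor
  · -- λ_i ≤ μ_i
    intro i
    have hd1 : finrank ℂ ↥(Submodule.span ℂ (bH '' ((Finset.Ici i : Finset (Fin n)) : Set (Fin n))))
        = n - (i : ℕ) := by
      rw [finrank_span_orthonormal]; exact Fin.card_Ici i
    have hd2 : finrank ℂ ↥(Submodule.span ℂ (bZ '' ((Finset.Iic i : Finset (Fin n)) : Set (Fin n))))
        = (i : ℕ) + 1 := by
      rw [finrank_span_orthonormal]; exact Fin.card_Iic i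
    set V := Submodule.span ℂ (bH '' ((Finset.Ici i : Finset (Fin n)) : Set (Fin n))) with hVdef
    set W := Submodule.span ℂ (bZ '' ((Finset.Iic i : Finset (Fin n)) : Set (Fin n))) with hWdef
    obtain ⟨x, hx0, hx⟩ := exists_ne_zero_mem (n := n) (V ⊓ W) (by
      have hle := finrank_add_le V W
      rw [hd1, hd2] at hle
      have hi : (i : ℕ) < n := i.isLt
      omega)
    have hA : sortedEigenvalues hH i * ‖x‖ ^ 2 ≤ (inner ℂ x (TH x) : ℂ).re :=
      le_quad bH TH (sortedEigenvalues hH) hbH _ (sortedEigenvalues hH i)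
        (fun j hj => hlam (by simpa using hj)) hx.1
    have hB : (inner ℂ x (TZ x) : ℂ).re ≤ sortedEigenvalues hZ i * ‖x‖ ^ 2 :=
      quad_le bZ TZ (sortedEigenvalues hZ) hbZ _ (sortedEigenvalues hZ i)
        (fun j hj => hmu (by simpa using hj)) hx.2
    have hC := hTZx x
    have hpos : 0 < ‖x‖ ^ 2 := by
      have : ‖x‖ ≠ 0 := norm_ne_zero_iff.mpr hx0
      positivity
    have hmul : sortedEigenvalues hH i * ‖x‖ ^ 2 ≤ sortedEigenvalues hZ i * ‖x‖ ^ 2 := by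
      nlinarith [sq_nonneg ‖(inner ℂ u' x : ℂ)‖]
    exact le_of_mul_le_mul_right hmul hpos
  · -- μ_i ≤ λ_{i+1}
    intro i h
    set i' : Fin n := ⟨(i : ℕ) + 1, h⟩ with hi'def
    have hu' : u' ≠ 0 := by
      intro hc
      apply hu
      rw [← (WithLp.equiv 2 (Fin n → ℂ)).apply_symm_apply u, ← hu'def, hc]
      simp
    have hK : finrank ℂ ↥((ℂ ∙ u')ᗮ) = n - 1 := by
      have h1 : finrank ℂ ↥(ℂ ∙ u') = 1 := finrank_span_singleton hu'
      have h2 := Submodule.finrank_add_finrank_orthogonal (K := (ℂ ∙ u'))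
      simp only [finrank_euclideanSpace, Fintype.card_fin] at h2
      omega
    have hd1 : finrank ℂ ↥(Submodule.span ℂ (bH '' ((Finset.Iic i' : Finset (Fin n)) : Set (Fin n))))
        = (i : ℕ) + 2 := by
      rw [finrank_span_orthonormal]; exact Fin.card_Iic i'
    have hd2 : finrank ℂ ↥(Submodule.span ℂ (bZ '' ((Finset.Ici i : Finset (Fin n)) : Set (Fin n))))
        = n - (i : ℕ) := by
      rw [finrank_span_orthonormal]; exact Fin.card_Ici i
    set V := Submodule.span ℂ (bH '' ((Finset.Iic i' : Finset (Fin n)) : Set (Fin n))) with hVdef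
    set W := Submodule.span ℂ (bZ '' ((Finset.Ici i : Finset (Fin n)) : Set (Fin n))) with hWdef
    have hVW : 2 ≤ finrank ℂ ↥(V ⊓ W) := by
      have hle := finrank_add_le V W
      rw [hd1, hd2] at hle
      omega
    obtain ⟨x, hx0, hx⟩ := exists_ne_zero_mem (n := n) ((V ⊓ W) ⊓ (ℂ ∙ u')ᗮ) (by
      have hle := finrank_add_le (V ⊓ W) ((ℂ ∙ u')ᗮ)
      rw [hK] at hle
      omega)
    have horth : (inner ℂ u' x : ℂ) = 0 :=
      Submodule.mem_orthogonal_singleton_iff_inner_right.mp hx.2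
    have hA : (inner ℂ x (TH x) : ℂ).re ≤ sortedEigenvalues hH i' * ‖x‖ ^ 2 :=
      quad_le bH TH (sortedEigenvalues hH) hbH _ (sortedEigenvalues hH i')
        (fun j hj => hlam (by simpa using hj)) hx.1.1
    have hB : sortedEigenvalues hZ i * ‖x‖ ^ 2 ≤ (inner ℂ x (TZ x) : ℂ).re :=
      le_quad bZ TZ (sortedEigenvalues hZ) hbZ _ (sortedEigenvalues hZ i)
        (fun j hj => hmu (by simpa using hj)) hx.1.2
    have hC := hTZx x
    rw [horth] at hC
    simp only [norm_zero] at hC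
    have hpos : 0 < ‖x‖ ^ 2 := by
      have : ‖x‖ ≠ 0 := norm_ne_zero_iff.mpr hx0
      positivity
    have hmul : sortedEigenvalues hZ i * ‖x‖ ^ 2 ≤ sortedEigenvalues hH i' * ‖x‖ ^ 2 := by
      nlinarith
    exact le_of_mul_le_mul_right hmul hpos
end
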